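/- For every real number d ≥ 2, the function x ↦ x²·e^{−1/x} − x² + (2 − 1/d)·x is strictly increasing on (0, ∞). -/

import Mathlib

lemma aux_exp_ineq (t : ℝ) (ht : 0 < t) : 2 - (3/2) * t < (2 + t) * Real.exp (-t) := by
  have hmono : StrictMonoOn (fun t : ℝ => (2 + t) * Real.exp (-t) - 2 + (3/2) * t)
      (Set.Ici 0) := by
    apply strictMonoOn_of_deriv_pos (convex_Ici 0)
    · exact (Continuous.continuousOn (by continuity))
    · intro s hs
      rw [interior_Ici] at hs
      have h1 : HasDerivAt (fun s : ℝ => 2 + s) 1 s := by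
        simpa using (hasDerivAt_id s).const_add 2
      have h2 : HasDerivAt (fun s : ℝ => Real.exp (-s)) (Real.exp (-s) * (-1)) s := by
        exact (hasDerivAt_neg s).exp
      have h3 : HasDerivAt (fun s : ℝ => (2 + s) * Real.exp (-s))
          (1 * Real.exp (-s) + (2 + s) * (Real.exp (-s) * (-1))) s := h1.mul h2
      have h4 : HasDerivAt (fun s : ℝ => (2 + s) * Real.exp (-s) - 2 + (3/2) * s)
          (1 * Real.exp (-s) + (2 + s) * (Real.exp (-s) * (-1)) - 0 + (3/2) * 1) s := by
        exact (h3.sub (hasDerivAt_const s 2)).add ((hasDerivAt_id s).const_mul (3/2))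
      rw [h4.deriv]
      have hle : (1 + s) * Real.exp (-s) ≤ 1 := by
        have h5 : 1 + s ≤ Real.exp s := by linarith [Real.add_one_le_exp s]
        have h6 : (0:ℝ) < Real.exp (-s) := Real.exp_pos _
        calc (1 + s) * Real.exp (-s) ≤ Real.exp s * Real.exp (-s) := by nlinarith
          _ = 1 := by rw [← Real.exp_add]; simp
      nlinarith
  have h0 : (0:ℝ) ∈ Set.Ici (0:ℝ) := Set.self_mem_Ici
  have ht' : t ∈ Set.Ici (0:ℝ) := le_of_lt ht
  have := hmono h0 ht' ht
  simp only [add_zero, neg_zero, Real.exp_zero, mul_one, mul_zero] at this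
  linarith

theorem xi_defining_strict_mono (d : ℝ) (hd : 2 ≤ d) :
    StrictMonoOn (fun x : ℝ => x ^ 2 * Real.exp (-(1 / x)) - x ^ 2 + (2 - 1 / d) * x)
      (Set.Ioi 0) := by
  have hdpos : (0:ℝ) < d := lt_of_lt_of_le (by norm_num) hd
  have hdinv : 1 / d ≤ 1 / 2 := by
    rw [div_le_div_iff₀ hdpos (by norm_num)]; linarith
  apply strictMonoOn_of_deriv_pos (convex_Ioi 0)
  · apply ContinuousOn.add
    · apply ContinuousOn.sub
      · apply ContinuousOn.mul (continuous_pow 2).continuousOn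
        exact Real.continuous_exp.comp_continuousOn
          ((continuousOn_const.div continuousOn_id
            (fun x hx => ne_of_gt hx)).neg)
      · exact (continuous_pow 2).continuousOn
    · exact (continuous_const.mul continuous_id).continuousOn
  · intro x hx
    rw [interior_Ioi] at hx
    have hx0 : x ≠ 0 := ne_of_gt hx
    have h1 : HasDerivAt (fun y : ℝ => -(1 / y)) ((x ^ 2)⁻¹) x := by
      have := (hasDerivAt_inv hx0).neg
      simp only [neg_neg] at this
      exact this.congr_of_eventuallyEq (Filter.Eventually.of_forall fun y => by simp [one_div])
    have h2 : HasDerivAt (fun y : ℝ => Real.exp (-(1 / y)))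
        (Real.exp (-(1 / x)) * (x ^ 2)⁻¹) x := h1.exp
    have h3 : HasDerivAt (fun y : ℝ => y ^ 2) (2 * x) x := by
      simpa using hasDerivAt_pow 2 x
    have h4 : HasDerivAt (fun y : ℝ => y ^ 2 * Real.exp (-(1 / y)))
        (2 * x * Real.exp (-(1 / x)) + x ^ 2 * (Real.exp (-(1 / x)) * (x ^ 2)⁻¹)) x :=
      h3.mul h2
    have h5 : HasDerivAt (fun y : ℝ => y ^ 2 * Real.exp (-(1 / y)) - y ^ 2 + (2 - 1 / d) * y)
        (2 * x * Real.exp (-(1 / x)) + x ^ 2 * (Real.exp (-(1 / x)) * (x ^ 2)⁻¹)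
          - 2 * x + (2 - 1 / d) * 1) x :=
      (h4.sub h3).add ((hasDerivAt_id x).const_mul (2 - 1 / d))
    rw [h5.deriv]
    have hxsq : x ^ 2 * (Real.exp (-(1 / x)) * (x ^ 2)⁻¹) = Real.exp (-(1 / x)) := by
      field_simp
    rw [hxsq]
    -- key inequality with t = 1/x
    have key := aux_exp_ineq (1 / x) (one_div_pos.mpr hx)
    have hEx : Real.exp (-(1 / x)) > 0 := Real.exp_pos _
    -- multiply key by x > 0 : (2x + 1) * exp(-(1/x)) > 2x - 3/2
    have key2 : (2 * x + 1) * Real.exp (-(1 / x)) > 2 * x - 3/2 := by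
      have := mul_lt_mul_of_pos_left key hx
      have hxx : x * ((2 + 1 / x) * Real.exp (-(1 / x)))
          = (2 * x + 1) * Real.exp (-(1 / x)) := by
        field_simp
      have hxy : x * (2 - 3/2 * (1 / x)) = 2 * x - 3/2 := by
        field_simp
      rw [hxx, hxy] at this
      linarith
    nlinarith
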